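/- For every norm ‖·‖₁ on ℂ^d there exists an invertible complex d×d matrix S such that d^{-1/2} ‖v‖₁ ≤ ‖Sv‖_e ≤ ‖v‖₁ for all v ∈ ℂ^d, where ‖·‖_e is the Euclidean norm on ℂ^d. -/

import Mathlib

/-- `ν` is a norm on `ℂ^d`. -/
structure IsNorm (d : ℕ) (ν : (Fin d → ℂ) → ℝ) : Prop where
  nonneg : ∀ v, 0 ≤ ν v
  eq_zero_iff : ∀ v, ν v = 0 ↔ v = 0
  homog : ∀ (c : ℂ) (v), ν (c • v) = ‖c‖ * ν v
  triangle : ∀ v w, ν (v + w) ≤ ν v + ν w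

/-- The Euclidean norm on `ℂ^d`. -/
noncomputable def euclNorm (d : ℕ) (v : Fin d → ℂ) : ℝ :=
  Real.sqrt (∑ i, ‖v i‖ ^ 2)


noncomputable section

namespace NormCompAux

/-- Type synonym of `Fin d → ℂ` carrying the norm `ν`. -/
def Sy (d : ℕ) (ν : (Fin d → ℂ) → ℝ) : Type := Fin d → ℂ

instance (d ν) : AddCommGroup (Sy d ν) := inferInstanceAs (AddCommGroup (Fin d → ℂ))
instance (d ν) : Module ℂ (Sy d ν) := inferInstanceAs (Module ℂ (Fin d → ℂ))
instance (d ν) : Norm (Sy d ν) := ⟨ν⟩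

variable {d : ℕ} {ν : (Fin d → ℂ) → ℝ}

/-- identity linear equivalence to the synonym -/
def sye (d ν) : (Fin d → ℂ) ≃ₗ[ℂ] Sy d ν := LinearEquiv.refl ℂ (Fin d → ℂ)

def syCore (hν : IsNorm d ν) : NormedSpace.Core ℂ (Sy d ν) where
  norm_nonneg := hν.nonneg
  norm_smul c x := by exact hν.homog c x
  norm_triangle := hν.triangle
  norm_eq_zero_iff := hν.eq_zero_iff

/-- the Euclidean structure map -/
def toE (d : ℕ) : (Fin d → ℂ) ≃ₗ[ℂ] EuclideanSpace ℂ (Fin d) :=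
  (WithLp.linearEquiv 2 ℂ (Fin d → ℂ)).symm

lemma toE_apply (w : Fin d → ℂ) (i : Fin d) : toE d w i = w i := rfl

lemma euclNorm_eq (w : Fin d → ℂ) : euclNorm d w = ‖toE d w‖ := by
  rw [EuclideanSpace.norm_eq, euclNorm]
  congr 1

lemma exists_dual (hν : IsNorm d ν) {x : Fin d → ℂ} (hx : x ≠ 0) :
    ∃ g : (Fin d → ℂ) →ₗ[ℂ] ℂ, (∀ v, ‖g v‖ ≤ ν v) ∧ g x = ν x := by
  letI : NormedAddCommGroup (Sy d ν) := NormedAddCommGroup.ofCore (syCore hν)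
  letI : NormedSpace ℂ (Sy d ν) := NormedSpace.ofCore (syCore hν)
  obtain ⟨g, hg1, hgx⟩ := exists_dual_vector ℂ (sye d ν x) (fun h => hx ((hν.eq_zero_iff x).1 h))
  refine ⟨(g.toLinearMap.comp (sye d ν).toLinearMap : (Fin d → ℂ) →ₗ[ℂ] ℂ), fun v => ?_, hgx⟩
  have := g.le_opNorm (sye d ν v)
  rw [hg1, one_mul] at this
  exact this

lemma exists_lower (hν : IsNorm d ν) : ∃ c : ℝ, 0 < c ∧ ∀ v, c * ‖toE d v‖ ≤ ν v := by
  letI : NormedAddCommGroup (Sy d ν) := NormedAddCommGroup.ofCore (syCore hν)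
  letI : NormedSpace ℂ (Sy d ν) := NormedSpace.ofCore (syCore hν)
  haveI : FiniteDimensional ℂ (Sy d ν) := Module.Finite.equiv (sye d ν)
  set f : Sy d ν →ₗ[ℂ] EuclideanSpace ℂ (Fin d) :=
    (toE d).toLinearMap.comp (sye d ν).symm.toLinearMap with hf
  have hfc : Continuous f := f.continuous_of_finiteDimensional
  set f' : Sy d ν →L[ℂ] EuclideanSpace ℂ (Fin d) := ⟨f, hfc⟩ with hf'
  refine ⟨(‖f'‖ + 1)⁻¹, by positivity, fun v => ?_⟩
  have h1 : ‖toE d v‖ ≤ (‖f'‖ + 1) * ν v := by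
    have := f'.le_opNorm (sye d ν v)
    have h2 : f' (sye d ν v) = toE d v := rfl
    rw [h2] at this
    have h3 : ‖sye d ν v‖ = ν v := rfl
    rw [h3] at this
    nlinarith [hν.nonneg v, norm_nonneg f']
  rw [inv_mul_le_iff₀ (by positivity)]
  linarith

end NormCompAux

namespace NormCompAux

lemma pow_mul_le (ε : ℝ) (hε : 0 ≤ ε) : ∀ k : ℕ, (1+ε)^k * (1 - k*ε) ≤ 1 := by
  intro k
  induction k with
  | zero => simp
  | succ n ih =>
    have h1 : (0:ℝ) ≤ (1+ε)^n := by positivity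
    have hn : (0:ℝ) ≤ n := Nat.cast_nonneg n
    have h2 : (1+ε) * (1 - (n+1)*ε) ≤ 1 - n*ε := by nlinarith [sq_nonneg ε, mul_nonneg hn (sq_nonneg ε)]
    calc (1+ε)^(n+1) * (1 - (n+1:ℕ)*ε) = (1+ε)^n * ((1+ε) * (1 - (n+1)*ε)) := by
          push_cast; ring
      _ ≤ (1+ε)^n * (1 - n*ε) := by nlinarith
      _ ≤ 1 := ih

lemma pow_mul_lt {ε : ℝ} (hε : 0 < ε) {k : ℕ} (hk : 1 ≤ k) : (1+ε)^k * (1 - k*ε) < 1 := by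
  obtain ⟨m, rfl⟩ := Nat.exists_eq_add_of_le hk
  have h1 : (0:ℝ) < (1+ε)^m := by positivity
  have ih := pow_mul_le ε hε.le m
  have hm : (0:ℝ) ≤ m := Nat.cast_nonneg m
  have h2 : (1+ε) * (1 - (m+1)*ε) < 1 - m*ε := by nlinarith [mul_pos hε hε, mul_nonneg hm (sq_nonneg ε), sq_nonneg ε]
  calc (1+ε)^(1+m) * (1 - (1+m:ℕ)*ε) = (1+ε)^m * ((1+ε) * (1 - (m+1)*ε)) := by
        push_cast; ring
    _ < (1+ε)^m * (1 - m*ε) := by nlinarith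
    _ ≤ 1 := ih

lemma abs_coord_le {d : ℕ} (w : Fin d → ℂ) (j : Fin d) : ‖w j‖ ≤ ‖toE d w‖ := by
  rw [← euclNorm_eq, euclNorm]
  have h1 : ‖w j‖ ^ 2 ≤ ∑ i, ‖w i‖ ^ 2 :=
    Finset.single_le_sum (f := fun i => ‖w i‖ ^ 2)
      (fun i _ => by positivity) (Finset.mem_univ j)
  calc ‖w j‖ = Real.sqrt (‖w j‖ ^ 2) := by
        rw [Real.sqrt_sq (by positivity)]
    _ ≤ _ := Real.sqrt_le_sqrt h1

end NormCompAux

namespace NormCompAux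

open scoped ComplexInnerProductSpace
open Matrix

variable {d : ℕ} {ν : (Fin d → ℂ) → ℝ}

set_option maxHeartbeats 2000000 in
lemma perturb (hν : IsNorm d ν) (hd : 0 < d) (S : Matrix (Fin d) (Fin d) ℂ)
    (hSK : ∀ v, ‖toE d (S.mulVec v)‖ ≤ ν v) (hdet : S.det ≠ 0)
    (x : Fin d → ℂ) (hx1 : ν x = 1)
    (hδ2 : (d : ℝ) * ‖toE d (S.mulVec x)‖ ^ 2 < 1) :
    ∃ T : Matrix (Fin d) (Fin d) ℂ, (∀ v, ‖toE d (T.mulVec v)‖ ≤ ν v) ∧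
      ‖S.det‖ < ‖T.det‖ := by
  classical
  have hx0 : x ≠ 0 := by
    intro h
    rw [h, (hν.eq_zero_iff 0).2 rfl] at hx1
    exact absurd hx1 (by norm_num)
  have hSu : IsUnit S.det := isUnit_iff_ne_zero.mpr hdet
  have hinv : S⁻¹ * S = 1 := Matrix.nonsing_inv_mul S hSu
  have hcancel : ∀ v, S⁻¹.mulVec (S.mulVec v) = v := by
    intro v; rw [Matrix.mulVec_mulVec, hinv, Matrix.one_mulVec]
  set δ := ‖toE d (S.mulVec x)‖ with hδdef
  have hδ0 : 0 < δ := by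
    rw [hδdef, norm_pos_iff]
    intro h
    apply hx0
    have h2 : S.mulVec x = 0 := by
      have := congrArg (toE d).symm h
      simpa using this
    rw [← hcancel x, h2, Matrix.mulVec_zero]
  obtain ⟨g, hg, hgx⟩ := exists_dual hν hx0
  rw [hx1] at hgx
  -- Riesz representation of v ↦ g (S⁻¹ (toE⁻¹ v))
  obtain ⟨ψ, hψ⟩ : ∃ ψ : EuclideanSpace ℂ (Fin d),
      ∀ v : Fin d → ℂ, (inner ℂ ψ (toE d (S.mulVec v)) : ℂ) = (g v : ℂ) := by
    refine ⟨(InnerProductSpace.toDual ℂ _).symm (LinearMap.toContinuousLinearMap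
      (g ∘ₗ (Matrix.mulVecLin S⁻¹) ∘ₗ (toE d).symm.toLinearMap)), fun v => ?_⟩
    rw [InnerProductSpace.toDual_symm_apply]
    show g (S⁻¹.mulVecLin ((toE d).symm (toE d (S.mulVec v)))) = g v
    rw [LinearEquiv.symm_apply_apply, Matrix.mulVecLin_apply, hcancel]
  have hψx : (inner ℂ ψ (toE d (S.mulVec x)) : ℂ) = (1 : ℂ) := by rw [hψ x, hgx]; norm_num
  have hψnorm : 1 ≤ ‖ψ‖ * δ := by
    have h := norm_inner_le_norm (𝕜 := ℂ) ψ (toE d (S.mulVec x))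
    rw [hψx] at h
    simpa using h
  have hψ0 : 0 < ‖ψ‖ := by nlinarith
  set l := ‖ψ‖⁻¹ with hldef
  have hl : 0 < l := by positivity
  have hml : l * ‖ψ‖ = 1 := inv_mul_cancel₀ hψ0.ne'
  have hlδ : l ≤ δ := by nlinarith
  have hdpos : (0 : ℝ) < d := Nat.cast_pos.mpr hd
  have hll : l * l ≤ δ * δ := mul_le_mul hlδ hlδ hl.le hδ0.le
  have hld : (d : ℝ) * l ^ 2 < 1 := by nlinarith
  -- the unit vector u
  set u : EuclideanSpace ℂ (Fin d) := (l : ℂ) • ψ with hudef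
  have hlc : ‖(l : ℂ)‖ = l := by
    rw [Complex.norm_real, Real.norm_eq_abs, abs_of_pos hl]
  have hu : ‖u‖ = 1 := by rw [hudef, norm_smul, hlc, hml]
  have hσ : ∀ v, (inner ℂ u (toE d (S.mulVec v)) : ℂ) = (l : ℂ) * g v := by
    intro v
    rw [hudef, inner_smul_left, hψ v, Complex.conj_ofReal]
  have hσle : ∀ v, ‖(inner ℂ u (toE d (S.mulVec v)) : ℂ)‖ ≤ l * ν v := by
    intro v
    rw [hσ v, norm_mul, Complex.norm_real, Real.norm_eq_abs, abs_of_pos hl]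
    exact mul_le_mul_of_nonneg_left (hg v) hl.le
  -- the parameters
  set ε := 1 / (d : ℝ) - l ^ 2 with hεdef
  have hdinv : (d : ℝ) * (1 / (d : ℝ)) = 1 := by field_simp
  have hε : 0 < ε := by
    rw [hεdef]
    nlinarith [hld, hdpos, hdinv]
  have hεl : ε + l ^ 2 = 1 / (d : ℝ) := by rw [hεdef]; ring
  have h1ε : (0 : ℝ) < 1 + ε := by linarith
  have hεl2 : (0 : ℝ) < ε + l ^ 2 := by positivity
  set β := Real.sqrt (1 + ε) with hβdef
  set α := Real.sqrt (l ^ 2 * (1 + ε) / (ε + l ^ 2)) with hαdef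
  have hβ0 : 0 < β := Real.sqrt_pos.mpr h1ε
  have hα0 : 0 < α := Real.sqrt_pos.mpr (by positivity)
  have hβ2 : β ^ 2 = 1 + ε := Real.sq_sqrt h1ε.le
  have hα2 : α ^ 2 = l ^ 2 * (1 + ε) / (ε + l ^ 2) := Real.sq_sqrt (by positivity)
  have hαβ : α ≤ β := by
    apply Real.sqrt_le_sqrt
    rw [div_le_iff₀ hεl2]
    nlinarith [mul_nonneg hε.le h1ε.le]
  have hba : β⁻¹ ≤ α⁻¹ := by
    apply inv_anti₀ hα0 hαβ
  set c : ℝ := α⁻¹ - β⁻¹ with hcdef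
  have hc0 : 0 ≤ c := by rw [hcdef, sub_nonneg]; exact hba
  -- the vector uf and rank-one matrix
  set uf : Fin d → ℂ := (toE d).symm u with hufdef
  have hufu : toE d uf = u := (toE d).apply_symm_apply u
  have hufdot : ∀ w : Fin d → ℂ, star uf ⬝ᵥ w = (inner ℂ u (toE d w) : ℂ) := by
    intro w
    rw [dotProduct, PiLp.inner_apply]
    apply Finset.sum_congr rfl
    intro i _
    rw [RCLike.inner_apply, mul_comm]
    rfl
  have hufuf : star uf ⬝ᵥ uf = 1 := by
    rw [hufdot uf, hufu, inner_self_eq_norm_sq_to_K, hu]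
    norm_num
  set R : Matrix (Fin d) (Fin d) ℂ :=
    Matrix.replicateCol (Fin 1) uf * Matrix.replicateRow (Fin 1) (star uf) with hRdef
  have hRmul : ∀ y : Fin d → ℂ, R.mulVec y = (star uf ⬝ᵥ y) • uf := by
    intro y
    rw [hRdef, ← Matrix.mulVec_mulVec, Matrix.replicateRow_mulVec_eq_const]
    funext i
    simp only [Matrix.mulVec, dotProduct, Matrix.replicateCol_apply, Function.const_apply,
      Finset.univ_unique, Finset.sum_singleton, Pi.smul_apply, smul_eq_mul]
    ring
  set M : Matrix (Fin d) (Fin d) ℂ := ((β⁻¹ : ℝ) : ℂ) • 1 + ((c : ℝ) : ℂ) • R with hMdef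
  have hMmul : ∀ y, M.mulVec y =
      ((β⁻¹ : ℝ) : ℂ) • y + ((c : ℝ) : ℂ) • ((star uf ⬝ᵥ y) • uf) := by
    intro y
    rw [hMdef, Matrix.add_mulVec, Matrix.smul_mulVec, Matrix.smul_mulVec,
      Matrix.one_mulVec, hRmul]
  refine ⟨M * S, fun v => ?_, ?_⟩
  · -- norm bound
    rw [← Matrix.mulVec_mulVec]
    have hw : ‖toE d (S.mulVec v)‖ ≤ ν v := hSK v
    set w : EuclideanSpace ℂ (Fin d) := toE d (S.mulVec v) with hwdef
    set σ : ℂ := (inner ℂ u w : ℂ) with hσdef2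
    have hσl : ‖σ‖ ≤ l * ν v := hσle v
    have hdot : star uf ⬝ᵥ (S.mulVec v) = σ := hufdot (S.mulVec v)
    have him : toE d (M.mulVec (S.mulVec v)) =
        ((β⁻¹ : ℝ) : ℂ) • (w - σ • u) + ((α⁻¹ : ℝ) : ℂ) • (σ • u) := by
      rw [hMmul, map_add, _root_.map_smul, _root_.map_smul, _root_.map_smul, hufu, hdot, ← hwdef]
      rw [hcdef]
      push_cast
      module
    have hip : (inner ℂ (w - σ • u) (σ • u) : ℂ) = 0 := by
      rw [inner_smul_right, inner_sub_left, inner_smul_left, ← inner_conj_symm w u,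
        ← hσdef2, inner_self_eq_norm_sq_to_K, hu]
      push_cast
      ring
    have hip2 : (inner ℂ (((β⁻¹ : ℝ) : ℂ) • (w - σ • u)) (((α⁻¹ : ℝ) : ℂ) • (σ • u)) : ℂ) = 0 := by
      rw [inner_smul_left, inner_smul_right, hip]
      ring
    have hpyth : ‖toE d (M.mulVec (S.mulVec v))‖ ^ 2
        = β⁻¹ ^ 2 * ‖w - σ • u‖ ^ 2 + α⁻¹ ^ 2 * (‖σ‖) ^ 2 := by
      rw [him, pow_two, norm_add_sq_eq_norm_sq_add_norm_sq_of_inner_eq_zero _ _ hip2]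
      rw [norm_smul, norm_smul, norm_smul]
      have e1 : ‖((β⁻¹ : ℝ) : ℂ)‖ = β⁻¹ := by
        rw [Complex.norm_real, Real.norm_eq_abs, abs_of_pos (by positivity)]
      have e2 : ‖((α⁻¹ : ℝ) : ℂ)‖ = α⁻¹ := by
        rw [Complex.norm_real, Real.norm_eq_abs, abs_of_pos (by positivity)]
      rw [e1, e2, hu]
      ring
    have hwσ : ‖w - σ • u‖ ^ 2 = ‖w‖ ^ 2 - (‖σ‖) ^ 2 := by
      have hdecomp : ‖w‖ ^ 2 = ‖w - σ • u‖ ^ 2 + (‖σ‖) ^ 2 := by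
        have : w = (w - σ • u) + σ • u := by abel
        nth_rewrite 1 [this]
        rw [pow_two, norm_add_sq_eq_norm_sq_add_norm_sq_of_inner_eq_zero _ _ hip]
        rw [norm_smul, hu]
        ring
      linarith
    -- the key identity
    have hlne : l ≠ 0 := hl.ne'
    have h1εne : (1 : ℝ) + ε ≠ 0 := h1ε.ne'
    have hεl2ne : ε + l ^ 2 ≠ 0 := hεl2.ne'
    have hid : β⁻¹ ^ 2 * (1 - l ^ 2) + α⁻¹ ^ 2 * l ^ 2 = 1 := by
      have hβ2' : β⁻¹ ^ 2 = (1 + ε)⁻¹ := by rw [inv_pow, hβ2]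
      have hα2' : α⁻¹ ^ 2 = (ε + l ^ 2) / (l ^ 2 * (1 + ε)) := by
        rw [inv_pow, hα2, inv_div]
      rw [hβ2', hα2']
      field_simp
      ring
    have hba2 : β⁻¹ ^ 2 ≤ α⁻¹ ^ 2 := by
      apply pow_le_pow_left₀ (by positivity) hba
    have hνv : 0 ≤ ν v := hν.nonneg v
    have hfinal : ‖toE d (M.mulVec (S.mulVec v))‖ ^ 2 ≤ (ν v) ^ 2 := by
      rw [hpyth, hwσ]
      have hσ2 : (‖σ‖) ^ 2 ≤ l ^ 2 * (ν v) ^ 2 := by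
        have h2 := pow_le_pow_left₀ (norm_nonneg σ) hσl 2
        rwa [mul_pow] at h2
      have hw2 : ‖w‖ ^ 2 ≤ (ν v) ^ 2 := pow_le_pow_left₀ (norm_nonneg w) hw 2
      have t1 : β⁻¹ ^ 2 * ‖w‖ ^ 2 ≤ β⁻¹ ^ 2 * (ν v) ^ 2 :=
        mul_le_mul_of_nonneg_left hw2 (by positivity)
      have t2 : (α⁻¹ ^ 2 - β⁻¹ ^ 2) * (‖σ‖) ^ 2
          ≤ (α⁻¹ ^ 2 - β⁻¹ ^ 2) * (l ^ 2 * (ν v) ^ 2) :=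
        mul_le_mul_of_nonneg_left hσ2 (by linarith)
      have hidN : (β⁻¹ ^ 2 * (1 - l ^ 2) + α⁻¹ ^ 2 * l ^ 2) * (ν v) ^ 2 = (ν v) ^ 2 := by
        rw [hid, one_mul]
      calc β⁻¹ ^ 2 * (‖w‖ ^ 2 - ‖σ‖ ^ 2) + α⁻¹ ^ 2 * ‖σ‖ ^ 2
          = β⁻¹ ^ 2 * ‖w‖ ^ 2 + (α⁻¹ ^ 2 - β⁻¹ ^ 2) * (‖σ‖) ^ 2 := by ring
        _ ≤ β⁻¹ ^ 2 * (ν v) ^ 2 + (α⁻¹ ^ 2 - β⁻¹ ^ 2) * (l ^ 2 * (ν v) ^ 2) :=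
            add_le_add t1 t2
        _ = (β⁻¹ ^ 2 * (1 - l ^ 2) + α⁻¹ ^ 2 * l ^ 2) * (ν v) ^ 2 := by ring
        _ = (ν v) ^ 2 := hidN
    have hsq := Real.sqrt_le_sqrt hfinal
    rwa [Real.sqrt_sq (norm_nonneg _), Real.sqrt_sq hνv] at hsq
  · -- determinant grows
    have hMdet : M.det = ((β⁻¹ : ℝ) : ℂ) ^ d * (1 + ((β * c : ℝ) : ℂ)) := by
      have hβcne : (β : ℂ) ≠ 0 := Complex.ofReal_ne_zero.mpr hβ0.ne'
      have hM2 : M = ((β⁻¹ : ℝ) : ℂ) • (1 + ((β * c : ℝ) : ℂ) • R) := by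
        have hco : ((β⁻¹ : ℝ) : ℂ) * ((β * c : ℝ) : ℂ) = ((c : ℝ) : ℂ) := by
          push_cast
          field_simp
        rw [hMdef, smul_add, smul_smul, hco]
      rw [hM2, Matrix.det_smul, Fintype.card_fin]
      congr 1
      have hsr : ((β * c : ℝ) : ℂ) • R =
          Matrix.replicateCol (Fin 1) (((β * c : ℝ) : ℂ) • uf) * Matrix.replicateRow (Fin 1) (star uf) := by
        rw [hRdef, Matrix.replicateCol_smul, Matrix.smul_mul]
      have hdl := Matrix.det_one_add_replicateCol_mul_replicateRow (ι := Fin 1) (((β * c : ℝ) : ℂ) • uf) (star uf)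
      rw [dotProduct_smul, hufuf] at hdl
      rw [hsr]
      convert hdl using 1
      · congr!
      · simp
    have habsM : ‖M.det‖ = β⁻¹ ^ d * (1 + β * c) := by
      have h1 : ((1:ℂ) + ((β * c : ℝ) : ℂ)) = (((1 + β * c : ℝ)) : ℂ) := by push_cast; ring
      have h1βc : (0:ℝ) < 1 + β * c := by positivity
      rw [hMdet, norm_mul, norm_pow, Complex.norm_real, Real.norm_eq_abs, h1, Complex.norm_real, Real.norm_eq_abs,
        abs_of_pos h1βc, abs_of_pos (inv_pos.mpr hβ0)]
    -- show 1 < |det M|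
    have hdε : (d : ℝ) * ε = 1 - (d : ℝ) * l ^ 2 := by
      rw [hεdef]
      field_simp
    have hkey : ((d : ℝ) * l ^ 2) * (1 + ε) ^ d < 1 := by
      have := pow_mul_lt hε (hd : 1 ≤ d)
      have h2 : 1 - (d : ℝ) * ε = (d : ℝ) * l ^ 2 := by linarith
      calc ((d : ℝ) * l ^ 2) * (1 + ε) ^ d = (1 + ε) ^ d * (1 - (d : ℝ) * ε) := by
            rw [h2]; ring
        _ < 1 := this
    have hr2 : (α * β ^ (d - 1)) ^ 2 < 1 := by
      have hβpow : (β ^ (d - 1)) ^ 2 = (1 + ε) ^ (d - 1) := by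
        rw [← pow_mul, mul_comm (d-1) 2, pow_mul, hβ2]
      have expand : (α * β ^ (d - 1)) ^ 2 = α ^ 2 * (1 + ε) ^ (d - 1) := by
        rw [mul_pow, hβpow]
      rw [expand, hα2, hεl]
      have hpow : (1 + ε) * (1 + ε) ^ (d - 1) = (1 + ε) ^ d := by
        rw [← pow_succ']
        congr 1
        omega
      calc l ^ 2 * (1 + ε) / (1 / (d:ℝ)) * (1 + ε) ^ (d - 1)
          = ((d : ℝ) * l ^ 2) * ((1 + ε) * (1 + ε) ^ (d - 1)) := by
            field_simp
        _ = ((d : ℝ) * l ^ 2) * (1 + ε) ^ d := by rw [hpow]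
        _ < 1 := hkey
    have hrpos : 0 < α * β ^ (d - 1) := by positivity
    have hr : α * β ^ (d - 1) < 1 := by
      by_contra hcon
      push_neg at hcon
      have h2 := pow_le_pow_left₀ (by norm_num : (0:ℝ) ≤ 1) hcon 2
      rw [one_pow] at h2
      linarith
    have h1c : 1 + β * c = β / α := by
      rw [hcdef]
      field_simp
      ring
    have habsM2 : ‖M.det‖ = (α * β ^ (d - 1))⁻¹ := by
      rw [habsM, h1c]
      have hβd : β * β ^ (d - 1) = β ^ d := by
        rw [← pow_succ']
        congr 1
        omega
      rw [inv_pow, ← hβd]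
      field_simp
    have hMgt : 1 < ‖M.det‖ := by
      rw [habsM2]
      exact (one_lt_inv₀ hrpos).mpr hr
    rw [Matrix.det_mul, norm_mul]
    have hSpos : 0 < ‖S.det‖ := by
      simpa [norm_pos_iff] using hdet
    exact (lt_mul_iff_one_lt_left hSpos).mpr hMgt

end NormCompAux

namespace NormCompAux

open Matrix

variable {d : ℕ} {ν : (Fin d → ℂ) → ℝ}

lemma exists_max (hν : IsNorm d ν) (hd : 0 < d) :
    ∃ S : Matrix (Fin d) (Fin d) ℂ, (∀ v, ‖toE d (S.mulVec v)‖ ≤ ν v) ∧ S.det ≠ 0 ∧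
      ∀ T : Matrix (Fin d) (Fin d) ℂ, (∀ v, ‖toE d (T.mulVec v)‖ ≤ ν v) →
        ‖T.det‖ ≤ ‖S.det‖ := by
  classical
  obtain ⟨c, hc, hcl⟩ := exists_lower hν
  set K : Set (Fin d → Fin d → ℂ) :=
    {A | ∀ v, ‖toE d ((Matrix.of A).mulVec v)‖ ≤ ν v} with hKdef
  have hmvcont : ∀ v : Fin d → ℂ, Continuous fun A : Fin d → Fin d → ℂ =>
      toE d ((Matrix.of A).mulVec v) := by
    intro v
    have h1 : Continuous fun A : Fin d → Fin d → ℂ => (Matrix.of A).mulVec v := by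
      apply continuous_pi
      intro i
      simp only [Matrix.mulVec, dotProduct, Matrix.of_apply]
      apply continuous_finset_sum
      intro j _
      exact (continuous_apply_apply i j).mul continuous_const
    exact ((toE d).toLinearMap.continuous_of_finiteDimensional).comp h1
  have hKclosed : IsClosed K := by
    have hrw : K = ⋂ v : Fin d → ℂ,
        {A : Fin d → Fin d → ℂ | ‖toE d ((Matrix.of A).mulVec v)‖ ≤ ν v} := by
      ext A
      simp [hKdef, Set.mem_iInter]
    rw [hrw]
    exact isClosed_iInter fun v => isClosed_le (hmvcont v).norm continuous_const
  have hKbounded : Bornology.IsBounded K := by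
    rw [isBounded_iff_forall_norm_le]
    have hRnn : (0:ℝ) ≤ ∑ j, ν (Pi.single j 1) :=
      Finset.sum_nonneg fun j _ => hν.nonneg _
    refine ⟨∑ j, ν (Pi.single j 1), fun A hA => ?_⟩
    rw [pi_norm_le_iff_of_nonneg hRnn]
    intro i
    rw [pi_norm_le_iff_of_nonneg hRnn]
    intro j
    calc ‖A i j‖ = ‖(Matrix.of A).mulVec (Pi.single j 1) i‖ := by
          rw [Matrix.mulVec_single]
          simp
      _ ≤ ‖toE d ((Matrix.of A).mulVec (Pi.single j 1))‖ := abs_coord_le _ _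
      _ ≤ ν (Pi.single j 1) := hA _
      _ ≤ ∑ j', ν (Pi.single j' 1) :=
          Finset.single_le_sum (f := fun j' => ν (Pi.single j' 1)) (fun k _ => hν.nonneg _) (Finset.mem_univ j)
  haveI : ProperSpace (Fin d → Fin d → ℂ) := FiniteDimensional.proper ℂ _
  have hKcompact : IsCompact K := Metric.isCompact_iff_isClosed_bounded.mpr ⟨hKclosed, hKbounded⟩
  set A₀ : Matrix (Fin d) (Fin d) ℂ := (c : ℂ) • 1 with hA₀def
  have hccnorm : ‖((c:ℝ) : ℂ)‖ = c := by
    rw [Complex.norm_real, Real.norm_eq_abs, abs_of_pos hc]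
  have hA₀K : (Matrix.of.symm A₀) ∈ K := by
    intro v
    show ‖toE d ((Matrix.of (Matrix.of.symm A₀)).mulVec v)‖ ≤ ν v
    rw [Equiv.apply_symm_apply, hA₀def, Matrix.smul_mulVec, Matrix.one_mulVec,
      _root_.map_smul, norm_smul, hccnorm]
    exact hcl v
  have hdetcont : Continuous fun A : Fin d → Fin d → ℂ => ‖(Matrix.of A).det‖ := by
    apply continuous_norm.comp
    simp only [Matrix.det_apply']
    apply continuous_finset_sum
    intro σ _
    apply Continuous.mul continuous_const
    apply continuous_finset_prod
    intro i _
    exact (continuous_apply i).comp (continuous_apply (σ i))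
  obtain ⟨Sg, hSgK, hSgmax⟩ :=
    hKcompact.exists_isMaxOn ⟨Matrix.of.symm A₀, hA₀K⟩ hdetcont.continuousOn
  refine ⟨Matrix.of Sg, hSgK, ?_, ?_⟩
  · have hcd : ‖A₀.det‖ = c ^ d := by
      rw [hA₀def, Matrix.det_smul, Matrix.det_one, mul_one, norm_pow, Complex.norm_real, Real.norm_eq_abs,
        abs_of_pos hc, Fintype.card_fin]
    have hle : ‖A₀.det‖ ≤ ‖(Matrix.of Sg).det‖ := by
      have h2 := hSgmax hA₀K
      simpa using h2
    intro h
    rw [h] at hle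
    simp only [norm_zero] at hle
    have := pow_pos hc d
    linarith [hcd ▸ hle]
  · intro T hT
    have hTK : Matrix.of.symm T ∈ K := by
      intro v
      show ‖toE d ((Matrix.of (Matrix.of.symm T)).mulVec v)‖ ≤ ν v
      rw [Equiv.apply_symm_apply]
      exact hT v
    have := hSgmax hTK
    simpa using this

end NormCompAux


/-- For every norm `‖·‖₁` on `ℂ^d` there is an invertible matrix `S` with
`d^{-1/2}·‖v‖₁ ≤ ‖Sv‖_e ≤ ‖v‖₁` for all `v`. -/
theorem norm_comparison_with_euclidean
    (d : ℕ) (ν : (Fin d → ℂ) → ℝ) (hν : IsNorm d ν) :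
    ∃ S : Matrix (Fin d) (Fin d) ℂ, IsUnit S ∧
      ∀ v : Fin d → ℂ,
        (d : ℝ) ^ (-(1 / 2) : ℝ) * ν v ≤ euclNorm d (S.mulVec v) ∧
        euclNorm d (S.mulVec v) ≤ ν v := by
  classical
  open NormCompAux in
  rcases Nat.eq_zero_or_pos d with hd0 | hd
  · subst hd0
    refine ⟨1, isUnit_one, fun v => ?_⟩
    have hv : v = 0 := funext fun i => i.elim0
    subst hv
    have h0 : ν 0 = 0 := (hν.eq_zero_iff 0).2 rfl
    rw [Matrix.mulVec_zero]
    have he : euclNorm 0 (0 : Fin 0 → ℂ) = 0 := by simp [euclNorm]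
    rw [he, h0, mul_zero]
    exact ⟨le_refl 0, le_refl 0⟩
  · obtain ⟨S, hSK, hSdet, hSmax⟩ := NormCompAux.exists_max hν hd
    refine ⟨S, (Matrix.isUnit_iff_isUnit_det S).mpr (isUnit_iff_ne_zero.mpr hSdet), fun v => ?_⟩
    have hupper : euclNorm d (S.mulVec v) ≤ ν v := by
      rw [NormCompAux.euclNorm_eq]
      exact hSK v
    refine ⟨?_, hupper⟩
    by_contra hcon
    push_neg at hcon
    rw [NormCompAux.euclNorm_eq] at hcon
    set p : ℝ := (d : ℝ) ^ (-(1 / 2) : ℝ) with hpdef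
    have hdpos : (0:ℝ) < d := Nat.cast_pos.mpr hd
    have hppos : 0 < p := Real.rpow_pos_of_pos hdpos _
    have heucnn : 0 ≤ ‖NormCompAux.toE d (S.mulVec v)‖ := norm_nonneg _
    have hν0 : 0 < ν v := by
      rcases (hν.nonneg v).lt_or_eq with h | h
      · exact h
      · exfalso
        have hv0 : v = 0 := (hν.eq_zero_iff v).1 h.symm
        have h0' : ν 0 = 0 := (hν.eq_zero_iff 0).2 rfl
        rw [hv0, Matrix.mulVec_zero, h0', mul_zero, map_zero, norm_zero] at hcon
        exact lt_irrefl 0 hcon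
    set x := ((ν v : ℝ) : ℂ)⁻¹ • v with hxdef
    have hxν : ν x = 1 := by
      rw [hxdef, hν.homog, norm_inv, Complex.norm_real, Real.norm_eq_abs, abs_of_pos hν0]
      field_simp
    have hp2 : p ^ 2 = (d:ℝ)⁻¹ := by
      rw [hpdef, ← Real.rpow_natCast ((d:ℝ) ^ (-(1/2):ℝ)) 2, ← Real.rpow_mul hdpos.le]
      norm_num
      rw [Real.rpow_neg_one]
    have hd2 : (d:ℝ) * ‖NormCompAux.toE d (S.mulVec x)‖ ^ 2 < 1 := by
      have hSx : S.mulVec x = ((ν v : ℝ) : ℂ)⁻¹ • S.mulVec v := by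
        rw [hxdef, Matrix.mulVec_smul]
      have h1 : ‖(((ν v : ℝ) : ℂ))⁻¹‖ = (ν v)⁻¹ := by
        rw [norm_inv, Complex.norm_real, Real.norm_eq_abs, abs_of_pos hν0]
      have h2 : ‖NormCompAux.toE d (S.mulVec x)‖ = (ν v)⁻¹ * ‖NormCompAux.toE d (S.mulVec v)‖ := by
        rw [hSx, _root_.map_smul, norm_smul, h1]
      have h3 : (ν v)⁻¹ * ‖NormCompAux.toE d (S.mulVec v)‖ < p := by
        have h4 := mul_lt_mul_of_pos_left hcon (inv_pos.mpr hν0)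
        have h5 : (ν v)⁻¹ * (p * ν v) = p := by field_simp
        rw [h5] at h4
        exact h4
      have h6 : ‖NormCompAux.toE d (S.mulVec x)‖ ^ 2 < p ^ 2 := by
        rw [h2]
        apply pow_lt_pow_left₀ h3 (by positivity) (by norm_num)
      calc (d:ℝ) * ‖NormCompAux.toE d (S.mulVec x)‖ ^ 2 < (d:ℝ) * p ^ 2 :=
            mul_lt_mul_of_pos_left h6 hdpos
        _ = 1 := by rw [hp2, mul_inv_cancel₀ hdpos.ne']
    obtain ⟨T, hTK, hTdet⟩ := NormCompAux.perturb hν hd S hSK hSdet x hxν hd2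
    have := hSmax T hTK
    linarith
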